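/- Let M : (\mathbb{C}^\mathbb{N})^m \to \mathbb{C}^\mathbb{N} be defined by M(x_{1-m},...,x_0) = [x_{1-m}]_1 \cdots [x_{-1}]_1 B(x_0), where B is the backward shift on \mathbb{C}^\mathbb{N} with the product topology. Then M is strongly transitive: for all nonempty open sets U_{1-m},...,U_0, V in \mathbb{C}^\mathbb{N} there exists n such that M^{[n]}(U_{1-m} \times \cdots \times U_0) \cap V \neq \emptyset. -/
import Mathlib

noncomputable def qf (m N0 : ℕ) (a b : ℕ → ℂ) : ℕ → ℂ
  | s =>
    if s < N0 then
      (∏ k : Fin s, ∏ i : Fin m,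
        if k.1 + i.1 < m then a (k.1 + i.1) else qf m N0 a b (k.1 + i.1 - m)) * b s
    else 1
termination_by s => s
decreasing_by have := k.2; have := i.2; omega

noncomputable def df (m N0 : ℕ) (a b : ℕ → ℂ) (t : ℕ) : ℂ :=
  if t < m then a t else qf m N0 a b (t - m)

noncomputable def Pf (m N0 : ℕ) (a b : ℕ → ℂ) (s : ℕ) : ℂ :=
  ∏ k ∈ Finset.range s, ∏ i : Fin m, df m N0 a b (k + i.1)

lemma qf_eq (m N0 : ℕ) (a b : ℕ → ℂ) (s : ℕ) :
    qf m N0 a b s = if s < N0 then Pf m N0 a b s * b s else 1 := by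
  rw [qf, Pf]
  congr 1
  rw [← Fin.prod_univ_eq_prod_range (fun k => ∏ i : Fin m, df m N0 a b (k + i.1)) s]
  rfl

lemma qf_ne_zero (m N0 : ℕ) (a b : ℕ → ℂ) (ha : ∀ t, a t ≠ 0) (hb : ∀ s, b s ≠ 0) :
    ∀ s, qf m N0 a b s ≠ 0 := by
  intro s
  induction s using Nat.strong_induction_on with
  | _ s ih =>
    rw [qf_eq]
    split
    · apply mul_ne_zero _ (hb s)
      rw [Pf]
      apply Finset.prod_ne_zero_iff.mpr
      intro k hk
      apply Finset.prod_ne_zero_iff.mpr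
      intro i _
      rw [df]
      split
      · exact ha _
      · refine ih _ ?_
        have := Finset.mem_range.mp hk
        have := i.2
        omega
    · exact one_ne_zero

lemma Pf_ne_zero (m N0 : ℕ) (a b : ℕ → ℂ) (ha : ∀ t, a t ≠ 0) (hb : ∀ s, b s ≠ 0)
    (s : ℕ) : Pf m N0 a b s ≠ 0 := by
  rw [Pf]
  apply Finset.prod_ne_zero_iff.mpr
  intro k _
  apply Finset.prod_ne_zero_iff.mpr
  intro i _
  rw [df]
  split
  · exact ha _
  · exact qf_ne_zero m N0 a b ha hb _

def stepF {m : ℕ} (M : (Fin (m + 1) → (ℕ → ℂ)) → (ℕ → ℂ))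
    (v : Fin (m + 1) → (ℕ → ℂ)) : Fin (m + 1) → (ℕ → ℂ) :=
  Fin.snoc (fun i => v i.succ) (M v)

/-- Strong transitivity of `M(x_{1-m},…,x_0) = [x_{1-m}]_1 ⋯ [x_{-1}]_1 ⋅ B(x_0)` on `ℂ^ℕ`
with the product topology: for all nonempty open sets `U_{1-m},…,U_0, V` there are initial
conditions in the `U_i` and `n ≥ 1` with the `n`-th orbit element in `V`. -/
theorem stmt_8 {m : ℕ}
    (M : (Fin (m + 1) → (ℕ → ℂ)) → (ℕ → ℂ))
    (hM : ∀ v, M v = (∏ i : Fin m, v i.castSucc 0) • fun j => v (Fin.last m) (j + 1)) :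
    ∀ (U : Fin (m + 1) → Set (ℕ → ℂ)) (V : Set (ℕ → ℂ)),
      (∀ i, IsOpen (U i)) → (∀ i, (U i).Nonempty) → IsOpen V → V.Nonempty →
      ∃ (x : ℕ → (ℕ → ℂ)) (n : ℕ), 1 ≤ n ∧
        (∀ i : Fin (m + 1), x (i : ℕ) ∈ U i) ∧
        (∀ k : ℕ, x (k + (m + 1)) = M (fun i : Fin (m + 1) => x (k + (i : ℕ)))) ∧
        x (m + n) ∈ V := by
  intro U V hUo hUne hVo hVne
  classical
  choose p hp using hUne
  obtain ⟨v, hv⟩ := hVne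
  have hbasic : ∀ i : Fin (m + 1), ∃ (I : Finset ℕ) (w : ℕ → Set ℂ),
      (∀ t ∈ I, IsOpen (w t) ∧ p i t ∈ w t) ∧ (I : Set ℕ).pi w ⊆ U i :=
    fun i => (isOpen_pi_iff.mp (hUo i)) (p i) (hp i)
  choose I w hw hsub using hbasic
  have hnz : ∀ (s : Set ℂ), IsOpen s → s.Nonempty → ∃ z ∈ s, z ≠ 0 := by
    intro s hs hne
    obtain ⟨z, hzs, hz⟩ := (dense_compl_singleton (0 : ℂ)).inter_open_nonempty s hs hne
    exact ⟨z, hzs, hz⟩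
  have hsel : ∀ (i : Fin (m + 1)) (t : ℕ), ∃ zz : ℂ, (t ∈ I i → zz ∈ w i t) ∧ zz ≠ 0 := by
    intro i t
    by_cases h : t ∈ I i
    · obtain ⟨zz, hz1, hz2⟩ := hnz (w i t) (hw i t h).1 ⟨p i t, (hw i t h).2⟩
      exact ⟨zz, fun _ => hz1, hz2⟩
    · exact ⟨1, fun h' => absurd h' h, one_ne_zero⟩
  choose z hzmem hzne using hsel
  set a : ℕ → ℂ := fun t => if h : t < m then z ⟨t, by omega⟩ 0 else 1 with ha_def
  set b : ℕ → ℂ := fun s => z (Fin.last m) s with hb_def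
  have ha0 : ∀ t, a t ≠ 0 := by
    intro t; rw [ha_def]; dsimp only; split
    · exact hzne _ _
    · exact one_ne_zero
  have hb0 : ∀ s, b s ≠ 0 := fun s => hzne _ _
  set N0 : ℕ := (I (Fin.last m)).sup id + 1 with hN0_def
  have hIN0 : ∀ t ∈ I (Fin.last m), t < N0 := by
    intro t ht
    have := Finset.le_sup (f := id) ht
    simp only [id] at this
    omega
  set n : ℕ := N0 + 1 with hn_def
  set P : ℕ → ℂ := Pf m N0 a b with hP_def
  set q : ℕ → ℂ := qf m N0 a b with hq_def
  have hP0 : ∀ s, P s ≠ 0 := fun s => Pf_ne_zero m N0 a b ha0 hb0 s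
  have hq0 : ∀ s, q s ≠ 0 := fun s => qf_ne_zero m N0 a b ha0 hb0 s
  set g : ℕ → ℂ := fun s =>
    if s < N0 then b s else if s < n then 1 else (P n)⁻¹ * v (s - n) with hg_def
  set x0 : Fin (m + 1) → (ℕ → ℂ) := fun i =>
    if (i : ℕ) < m then (fun t => if t = 0 then a i else p i t) else g with hx0_def
  set X : ℕ → (ℕ → ℂ) := fun nn =>
    (stepF M)^[nn - m] x0 ⟨min nn m, Nat.lt_succ_of_le (min_le_right nn m)⟩ with hX_def
  have egen : ∀ (c1 c2 : ℕ), c1 = c2 → ∀ (j1 j2 : Fin (m + 1)), (j1 : ℕ) = (j2 : ℕ) →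
      (stepF M)^[c1] x0 j1 = (stepF M)^[c2] x0 j2 := by
    rintro c1 c2 rfl j1 j2 hj
    rw [Fin.ext hj]
  have key : ∀ (k : ℕ) (i : Fin (m + 1)), X (k + (i : ℕ)) = (stepF M)^[k] x0 i := by
    intro k
    induction k with
    | zero =>
      intro i
      rw [hX_def]
      dsimp only
      exact egen _ _ (by have := i.2; omega) _ _ (by have := i.2; simp; omega)
    | succ k ih =>
      intro i
      refine Fin.lastCases ?_ ?_ i
      · -- i = last
        rw [hX_def]
        dsimp only
        exact egen _ _ (by simp) _ _ (by simp)
      · -- i = castSucc j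
        intro j
        have e1 : k + 1 + ((Fin.castSucc j : Fin (m + 1)) : ℕ) = k + ((j.succ : Fin (m + 1)) : ℕ) := by
          simp; omega
        rw [e1, ih j.succ, Function.iterate_succ_apply']
        show _ = stepF M ((stepF M)^[k] x0) (Fin.castSucc j)
        rw [stepF, Fin.snoc_castSucc]
  have hXm : ∀ (i : Fin (m + 1)), X (i : ℕ) = x0 i := by
    intro i
    have := key 0 i
    simpa using this
  have hrec : ∀ k : ℕ, X (k + (m + 1)) = M (fun i : Fin (m + 1) => X (k + (i : ℕ))) := by
    intro k
    have e1 : k + (m + 1) = (k + 1) + ((Fin.last m : Fin (m + 1)) : ℕ) := by simp; omega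
    rw [e1, key (k + 1) (Fin.last m), Function.iterate_succ_apply']
    show stepF M ((stepF M)^[k] x0) (Fin.last m) = _
    rw [stepF, Fin.snoc_last]
    have e2 : (fun i : Fin (m + 1) => X (k + (i : ℕ))) = (stepF M)^[k] x0 :=
      funext fun i => key k i
    rw [e2]
  -- membership of initial conditions
  have hmemU : ∀ i : Fin (m + 1), X (i : ℕ) ∈ U i := by
    intro i
    rw [hXm i]
    refine hsub i fun t ht => ?_
    have ht' : t ∈ I i := ht
    simp only [hx0_def]
    by_cases hi : (i : ℕ) < m
    · rw [if_pos hi]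
      by_cases ht0 : t = 0
      · subst ht0
        rw [if_pos rfl]
        simp only [ha_def]
        rw [dif_pos hi]
        have e : (⟨(i : ℕ), by omega⟩ : Fin (m + 1)) = i := Fin.ext rfl
        rw [e]
        exact hzmem i 0 ht'
      · rw [if_neg ht0]
        exact (hw i t ht').2
    · rw [if_neg hi]
      have hi' : i = Fin.last m := Fin.ext (by simp only [Fin.val_last]; have := i.2; omega)
      subst hi'
      simp only [hg_def]
      rw [if_pos (hIN0 t ht')]
      exact hzmem _ t ht'
  -- the scalar-product formula for the orbit
  have keyB : ∀ s, s ≤ n → ∀ j, X (m + s) j = P s * g (s + j) := by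
    intro s
    induction s using Nat.strong_induction_on with
    | _ s ih =>
      intro hs j
      cases s with
      | zero =>
        have h0 : X (m + 0) = x0 (Fin.last m) := by
          have := hXm (Fin.last m)
          simpa using this
        rw [h0]
        simp only [hx0_def]
        rw [if_neg (by simp)]
        rw [hP_def, Pf]
        simp
      | succ s' =>
        have hfac : ∀ i : Fin m, X (s' + (i : ℕ)) 0 = df m N0 a b (s' + (i : ℕ)) := by
          intro i
          by_cases him : s' + (i : ℕ) < m
          · have hx : X (s' + (i : ℕ)) = x0 ⟨s' + (i : ℕ), by omega⟩ := by
              have := hXm ⟨s' + (i : ℕ), by omega⟩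
              simpa using this
            rw [hx]
            simp only [hx0_def]
            rw [if_pos (show ((⟨s' + (i : ℕ), by omega⟩ : Fin (m + 1)) : ℕ) < m from him)]
            rw [if_pos rfl, df, if_pos him]
          · have hi2 := i.2
            have e2 : s' + (i : ℕ) = m + (s' + (i : ℕ) - m) := by omega
            set t := s' + (i : ℕ) - m with ht_def
            have htN0 : t < N0 := by omega
            rw [e2, ih t (by omega) (by omega) 0]
            rw [df, if_neg (by omega)]
            have e3 : m + t - m = t := by omega
            rw [e3, qf_eq, if_pos htN0]
            simp only [hg_def, hP_def]
            rw [Nat.add_zero, if_pos htN0]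
        have e1 : m + (s' + 1) = s' + (m + 1) := by omega
        rw [e1, hrec s', hM]
        simp only [Pi.smul_apply, smul_eq_mul]
        have hprod : (∏ i : Fin m, X (s' + ((Fin.castSucc i : Fin (m + 1)) : ℕ)) 0)
            = ∏ i : Fin m, df m N0 a b (s' + (i : ℕ)) :=
          Finset.prod_congr rfl fun i _ => hfac i
        rw [hprod]
        have e4 : s' + ((Fin.last m : Fin (m + 1)) : ℕ) = m + s' := by
          simp only [Fin.val_last]; omega
        rw [e4, ih s' (by omega) (by omega) (j + 1)]
        have e5 : P (s' + 1) = P s' * ∏ i : Fin m, df m N0 a b (s' + (i : ℕ)) := by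
          simp only [hP_def, Pf]
          rw [Finset.prod_range_succ]
        rw [e5]
        have e6 : s' + (j + 1) = s' + 1 + j := by omega
        rw [e6]
        ring
  refine ⟨X, n, by omega, hmemU, hrec, ?_⟩
  have hfin : X (m + n) = v := by
    funext j
    rw [keyB n le_rfl j]
    simp only [hg_def]
    rw [if_neg (by omega), if_neg (by omega)]
    have e : n + j - n = j := by omega
    rw [e, ← mul_assoc, mul_inv_cancel₀ (hP0 n), one_mul]
  rw [hfin]
  exact hv
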